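/- Let K be a field of prime characteristic p and let L be a subfield with K^p ⊆ L ⊆ K. Let B₁ ⊆ L be a p-basis of L over K^p, i.e. L is generated as a field by K^p ∪ B₁ and for every finite subset C ⊆ B₁ the field K^p(C) has degree p^{|C|} over K^p. Let B₂ ⊆ K be a p-basis of K over L, i.e. K is generated as a field by L ∪ B₂ and for every finite subset C ⊆ B₂ the field L(C) has degree p^{|C|} over L. Write B₂^{(p)} = {x^p : x ∈ B₂}. Then B₁ ∪ B₂^{(p)} is a p-basis of L over L^p: L is generated as a field by L^p ∪ B₁ ∪ B₂^{(p)}, and for every finite subset C ⊆ B₁ ∪ B₂^{(p)} the field L^p(C) has degree p^{|C|} over L^p. -/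
import Mathlib


noncomputable section

variable {K : Type*} [Field K]

/-- The subfield `E(S)` of `K` generated by a subfield `E` together with a set `S`. -/
def adjoinSet (E : Subfield K) (S : Set K) : Subfield K := Subfield.closure (↑E ∪ S)

/-- The degree `[F : E]` of one subfield of `K` over another (`0` if `E ≰ F`). -/
noncomputable def sdeg (E F : Subfield K) : ℕ :=
  letI : Decidable (E ≤ F) := Classical.dec _
  if h : E ≤ F then
    letI : Algebra ↥E ↥F := (Subfield.inclusion h).toAlgebra
    Module.finrank ↥E ↥F
  else 0

/-- `B ⊆ K` is `p`-independent over a subfield `E`: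
`[E(C) : E] = p ^ |C|` for every finite subset `C` of `B`. -/
def IsPIndep (p : ℕ) (E : Subfield K) (B : Set K) : Prop :=
  ∀ C : Finset K, ↑C ⊆ B → sdeg E (adjoinSet E ↑C) = p ^ C.card

/-- `B` is a `p`-basis of the subfield `F` over `E`: it is `p`-independent over `E`
and `F` is generated as a field by `E ∪ B`. -/
def IsPBasis (p : ℕ) (E F : Subfield K) (B : Set K) : Prop :=
  IsPIndep p E B ∧ adjoinSet E B = F

namespace PBAux

theorem le_adjoinSet (E : Subfield K) (S : Set K) : E ≤ adjoinSet E S :=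
  fun _ hx => Subfield.subset_closure (Set.mem_union_left _ hx)

theorem subset_adjoinSet (E : Subfield K) (S : Set K) : S ⊆ ↑(adjoinSet E S) :=
  fun _ hx => Subfield.subset_closure (Set.mem_union_right _ hx)

theorem adjoinSet_le {E F : Subfield K} {S : Set K} (hE : E ≤ F) (hS : S ⊆ ↑F) :
    adjoinSet E S ≤ F :=
  Subfield.closure_le.2 (Set.union_subset hE hS)

theorem adjoinSet_mono {E E' : Subfield K} {S S' : Set K} (hE : E ≤ E') (hS : S ⊆ S') :
    adjoinSet E S ≤ adjoinSet E' S' :=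
  adjoinSet_le (hE.trans (le_adjoinSet E' S'))
    (hS.trans (subset_adjoinSet E' S'))

theorem adjoinSet_union (E : Subfield K) (S T : Set K) :
    adjoinSet E (S ∪ T) = adjoinSet (adjoinSet E S) T := by
  refine le_antisymm (adjoinSet_le ?_ ?_) (adjoinSet_le ?_ ?_)
  · exact (le_adjoinSet E S).trans (le_adjoinSet _ T)
  · exact Set.union_subset
      ((subset_adjoinSet E S).trans (le_adjoinSet _ T))
      (subset_adjoinSet _ T)
  · exact adjoinSet_mono le_rfl Set.subset_union_left
  · exact (Set.subset_union_right (s := S)).trans (subset_adjoinSet E (S ∪ T))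

theorem adjoinSet_empty (E : Subfield K) : adjoinSet E (∅ : Set K) = E := by
  rw [adjoinSet, Set.union_empty, Subfield.closure_eq]

theorem adjoinSet_insert (E : Subfield K) (a : K) (S : Set K) :
    adjoinSet E (insert a S) = adjoinSet (adjoinSet E S) {a} := by
  rw [Set.insert_eq, Set.union_comm, adjoinSet_union]

set_option synthInstance.maxHeartbeats 1000000 in
theorem sdeg_eq_relfinrank {E F : Subfield K} (h : E ≤ F) : sdeg E F = E.relfinrank F := by
  rw [Subfield.relfinrank_eq_finrank_of_le h]
  unfold sdeg
  rw [dif_pos h]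
  letI : Algebra ↥E ↥F := (Subfield.inclusion h).toAlgebra
  exact LinearEquiv.finrank_eq
    { toFun := fun x => ⟨x.1, x.2⟩
      invFun := fun x => ⟨x.1, x.2⟩
      map_add' := fun _ _ => rfl
      map_smul' := fun _ _ => rfl
      left_inv := fun _ => rfl
      right_inv := fun _ => rfl }

theorem extendScalars_adjoinSet (E : Subfield K) (S : Set K) :
    Subfield.extendScalars (le_adjoinSet E S) = IntermediateField.adjoin ↥E S := by
  apply IntermediateField.toSubfield_injective
  rw [IntermediateField.adjoin_toSubfield, Subfield.extendScalars_toSubfield]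
  have : Set.range (algebraMap ↥E K) = (E : Set K) := by
    ext x
    constructor
    · rintro ⟨⟨y, hy⟩, rfl⟩; exact hy
    · intro hx; exact ⟨⟨x, hx⟩, rfl⟩
  rw [adjoinSet, this]

theorem relfinrank_adjoinSet_singleton (E : Subfield K) {x : K} (hx : IsIntegral ↥E x) :
    E.relfinrank (adjoinSet E {x}) = (minpoly ↥E x).natDegree := by
  rw [Subfield.relfinrank_eq_finrank_of_le (le_adjoinSet E {x}), extendScalars_adjoinSet]
  exact IntermediateField.adjoin.finrank hx


theorem isIntegral_of_ppow {p : ℕ} (hp : p.Prime) {E : Subfield K} {x : K} (hx : x ^ p ∈ E) :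
    IsIntegral ↥E x := by
  refine ⟨Polynomial.X ^ p - Polynomial.C (⟨x ^ p, hx⟩ : ↥E),
    Polynomial.monic_X_pow_sub_C _ hp.ne_zero, ?_⟩
  simp only [Polynomial.eval₂_sub, Polynomial.eval₂_X_pow, Polynomial.eval₂_C]
  exact sub_eq_zero.2 rfl

theorem minpoly_natDegree_le_of_ppow {p : ℕ} (hp : p.Prime) {E : Subfield K} {x : K}
    (hx : x ^ p ∈ E) : (minpoly ↥E x).natDegree ≤ p := by
  have hmon : (Polynomial.X ^ p - Polynomial.C (⟨x ^ p, hx⟩ : ↥E)).Monic :=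
    Polynomial.monic_X_pow_sub_C _ hp.ne_zero
  have hdvd : minpoly ↥E x ∣ Polynomial.X ^ p - Polynomial.C (⟨x ^ p, hx⟩ : ↥E) := by
    apply minpoly.dvd
    simp only [map_sub, Polynomial.aeval_X_pow, Polynomial.aeval_C]
    exact sub_eq_zero.2 rfl
  calc (minpoly ↥E x).natDegree
      ≤ (Polynomial.X ^ p - Polynomial.C (⟨x ^ p, hx⟩ : ↥E)).natDegree :=
        Polynomial.natDegree_le_of_dvd hdvd hmon.ne_zero
    _ = p := Polynomial.natDegree_X_pow_sub_C

theorem relfinrank_adjoinSet_singleton_le {p : ℕ} (hp : p.Prime) {E : Subfield K} {x : K}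
    (hx : x ^ p ∈ E) : E.relfinrank (adjoinSet E {x}) ≤ p := by
  rw [relfinrank_adjoinSet_singleton E (isIntegral_of_ppow hp hx)]
  exact minpoly_natDegree_le_of_ppow hp hx

theorem relfinrank_adjoinSet_singleton_le_of_le {E' E : Subfield K} (h : E' ≤ E) {x : K}
    (hx : IsIntegral ↥E' x) :
    E.relfinrank (adjoinSet E {x}) ≤ E'.relfinrank (adjoinSet E' {x}) := by
  letI : Algebra ↥E' ↥E := (Subfield.inclusion h).toAlgebra
  haveI : IsScalarTower ↥E' ↥E K := IsScalarTower.of_algebraMap_eq' rfl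
  have hxE : IsIntegral ↥E x := hx.tower_top
  rw [relfinrank_adjoinSet_singleton E hxE, relfinrank_adjoinSet_singleton E' hx]
  have hdvd : minpoly ↥E x ∣ (minpoly ↥E' x).map (algebraMap ↥E' ↥E) :=
    minpoly.dvd_map_of_isScalarTower ↥E' ↥E x
  have hne : (minpoly ↥E' x).map (algebraMap ↥E' ↥E) ≠ 0 :=
    (Polynomial.map_ne_zero_iff (algebraMap ↥E' ↥E).injective).2 (minpoly.ne_zero hx)
  calc (minpoly ↥E x).natDegree
      ≤ ((minpoly ↥E' x).map (algebraMap ↥E' ↥E)).natDegree :=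
        Polynomial.natDegree_le_of_dvd hdvd hne
    _ ≤ (minpoly ↥E' x).natDegree := Polynomial.natDegree_map_le

theorem relfinrank_adjoinSet_le {p : ℕ} (hp : p.Prime) {E : Subfield K} (C : Finset K)
    (hC : ∀ x ∈ C, x ^ p ∈ E) :
    E.relfinrank (adjoinSet E ↑C) ≤ p ^ C.card := by
  classical
  induction C using Finset.induction with
  | empty => simp [adjoinSet_empty]
  | @insert a C ha IH =>
    rw [Finset.coe_insert, adjoinSet_insert,
      ← Subfield.relfinrank_mul_relfinrank (le_adjoinSet E ↑C) (le_adjoinSet _ {a}),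
      Finset.card_insert_of_notMem ha, pow_succ]
    exact Nat.mul_le_mul (IH fun x hx => hC x (Finset.mem_insert_of_mem hx))
      (relfinrank_adjoinSet_singleton_le hp
        (le_adjoinSet E ↑C (hC a (Finset.mem_insert_self a C))))

theorem relfinrank_adjoinSet_le_of_le {p : ℕ} (hp : p.Prime) {E' E : Subfield K} (h : E' ≤ E)
    (C : Finset K) (hC : ∀ x ∈ C, x ^ p ∈ E') :
    E.relfinrank (adjoinSet E ↑C) ≤ E'.relfinrank (adjoinSet E' ↑C) := by
  classical
  induction C using Finset.induction with
  | empty => simp [adjoinSet_empty]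
  | @insert a C ha IH =>
    rw [Finset.coe_insert, adjoinSet_insert, adjoinSet_insert,
      ← Subfield.relfinrank_mul_relfinrank (le_adjoinSet E ↑C) (le_adjoinSet _ {a}),
      ← Subfield.relfinrank_mul_relfinrank (le_adjoinSet E' ↑C) (le_adjoinSet _ {a})]
    refine Nat.mul_le_mul (IH fun x hx => hC x (Finset.mem_insert_of_mem hx)) ?_
    exact relfinrank_adjoinSet_singleton_le_of_le (adjoinSet_mono h le_rfl)
      (isIntegral_of_ppow hp (le_adjoinSet E' ↑C (hC a (Finset.mem_insert_self a C))))

theorem closure_map (f : K →+* K) (s : Set K) :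
    (Subfield.closure s).map f = Subfield.closure (f '' s) := by
  apply le_antisymm
  · rw [Subfield.map_le_iff_le_comap]
    apply Subfield.closure_le.2
    intro x hx
    exact Subfield.subset_closure ⟨x, hx, rfl⟩
  · apply Subfield.closure_le.2
    rintro y ⟨x, hx, rfl⟩
    exact ⟨x, Subfield.subset_closure hx, rfl⟩

theorem map_adjoinSet (f : K →+* K) (E : Subfield K) (S : Set K) :
    (adjoinSet E S).map f = adjoinSet (E.map f) (f '' S) := by
  rw [adjoinSet, adjoinSet, closure_map, Set.image_union, Subfield.coe_map]

end PBAux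

/-- The subfield `K^p` of `K`, the image of the Frobenius endomorphism. -/
def pPowSubfield (K : Type*) [Field K] (p : ℕ) (hp : p.Prime) [CharP K p] : Subfield K :=
  haveI : ExpChar K p := .prime hp
  (frobenius K p).fieldRange

/-- The subfield `L^p`, the image of a subfield `L` under the Frobenius endomorphism. -/
def frobMap (p : ℕ) (hp : p.Prime) [CharP K p] (L : Subfield K) : Subfield K :=
  haveI : ExpChar K p := .prime hp
  L.map (frobenius K p)

open PBAux in
/-- If `B₁` is a `p`-basis of `L` over `K^p` and `B₂` is a `p`-basis of `K` over `L`,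
then `B₁ ∪ B₂^{(p)}` is a `p`-basis of `L` over `L^p`. -/
theorem pBasis_of_intermediate_field
    (p : ℕ) (hp : p.Prime) [CharP K p]
    (L : Subfield K) (hKpL : pPowSubfield K p hp ≤ L)
    (B₁ : Set K) (hB₁L : B₁ ⊆ (L : Set K))
    (hB₁ : IsPBasis p (pPowSubfield K p hp) L B₁)
    (B₂ : Set K) (hB₂ : IsPBasis p L ⊤ B₂) :
    IsPBasis p (frobMap p hp L) L (B₁ ∪ (fun x : K => x ^ p) '' B₂) := by
  classical
  haveI : ExpChar K p := .prime hp
  set f := frobenius K p with hfdef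
  have hfx : ∀ x : K, f x = x ^ p := fun x => frobenius_def p x
  have hinj : Function.Injective f := f.injective
  have hLP : frobMap p hp L = L.map f := rfl
  have hKP : pPowSubfield K p hp = (⊤ : Subfield K).map f := by
    rw [pPowSubfield, RingHom.fieldRange_eq_map]
  have hPB₂ : (fun x : K => x ^ p) '' B₂ = f '' B₂ := by
    ext x; simp [hfx]
  have hLPKP : L.map f ≤ (⊤ : Subfield K).map f := by
    rintro _ ⟨x, _, rfl⟩; exact ⟨x, trivial, rfl⟩
  constructor
  · -- p-independence
    intro C hC
    rw [hLP]
    set C₁ := C.filter (· ∈ B₁) with hC₁def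
    set C₂ := C.filter (· ∉ B₁) with hC₂def
    have hC₁B : ↑C₁ ⊆ B₁ := fun x hx => (Finset.mem_filter.1 hx).2
    have hC₂B : ↑C₂ ⊆ (fun x : K => x ^ p) '' B₂ := by
      intro x hx
      rcases Finset.mem_filter.1 hx with ⟨hxC, hxB⟩
      rcases hC hxC with h | h
      · exact absurd h hxB
      · exact h
    have hcard : C₁.card + C₂.card = C.card :=
      Finset.card_filter_add_card_filter_not _
    have hCset : (↑C : Set K) = ↑C₂ ∪ ↑C₁ := by
      ext x
      simp only [hC₁def, hC₂def, Set.mem_union, Finset.coe_filter, Set.mem_setOf_eq,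
        Finset.mem_coe]
      tauto
    have hsub : (↑C₂ : Set K) ⊆ Set.range f := by
      intro x hx
      rcases hC₂B hx with ⟨b, _, rfl⟩
      exact ⟨b, hfx b⟩
    set D := C₂.preimage f hinj.injOn with hDdef
    have hC₂img : (↑C₂ : Set K) = f '' ↑D := by
      rw [hDdef, Finset.coe_preimage, Set.image_preimage_eq_of_subset hsub]
    have hDcard : D.card = C₂.card := by
      have : (D.image f : Set K) = ↑C₂ := by rw [Finset.coe_image, ← hC₂img]
      rw [← Finset.card_image_of_injective D hinj, Finset.coe_injective this]
    have hDB₂ : ↑D ⊆ B₂ := by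
      intro d hd
      have hfd : f d ∈ C₂ := Finset.mem_preimage.1 hd
      rcases hC₂B hfd with ⟨b, hb, hbe⟩
      have : f b = f d := by rw [hfx]; exact hbe
      rwa [← hinj this]
    rw [sdeg_eq_relfinrank (le_adjoinSet _ _), hCset, adjoinSet_union]
    set LP := L.map f with hLPdef
    set F₂ := adjoinSet LP ↑C₂ with hF₂def
    rw [← Subfield.relfinrank_mul_relfinrank (le_adjoinSet LP ↑C₂) (le_adjoinSet F₂ ↑C₁)]
    have hfact1 : LP.relfinrank F₂ = p ^ C₂.card := by
      rw [hF₂def, hC₂img, hLPdef, ← map_adjoinSet, Subfield.relfinrank_map_map,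
        ← sdeg_eq_relfinrank (le_adjoinSet _ _), hB₂.1 D hDB₂, hDcard]
    have hxpF₂ : ∀ x ∈ C₁, x ^ p ∈ F₂ := by
      intro x hx
      have hxL : x ∈ L := hB₁L (hC₁B hx)
      have hxLP : x ^ p ∈ LP := Subfield.mem_map.2 ⟨x, hxL, hfx x⟩
      exact le_adjoinSet LP ↑C₂ hxLP
    have hfact2 : F₂.relfinrank (adjoinSet F₂ ↑C₁) = p ^ C₁.card := by
      refine le_antisymm (relfinrank_adjoinSet_le hp C₁ hxpF₂) ?_
      have hF₂KP : F₂ ≤ (⊤ : Subfield K).map f := by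
        refine adjoinSet_le hLPKP ?_
        intro x hx
        rcases hC₂B hx with ⟨b, _, rfl⟩
        exact Subfield.mem_map.2 ⟨b, trivial, hfx b⟩
      have h1 : ((⊤ : Subfield K).map f).relfinrank
          (adjoinSet ((⊤ : Subfield K).map f) ↑C₁) = p ^ C₁.card := by
        rw [← sdeg_eq_relfinrank (le_adjoinSet _ _), ← hKP]
        exact hB₁.1 C₁ hC₁B
      calc p ^ C₁.card
          = ((⊤ : Subfield K).map f).relfinrank
            (adjoinSet ((⊤ : Subfield K).map f) ↑C₁) := h1.symm
        _ ≤ F₂.relfinrank (adjoinSet F₂ ↑C₁) :=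
            relfinrank_adjoinSet_le_of_le hp hF₂KP C₁ hxpF₂
    rw [hfact1, hfact2, ← pow_add, Nat.add_comm, hcard]
  · -- generation
    rw [Set.union_comm, adjoinSet_union, hPB₂, hLP, ← map_adjoinSet, hB₂.2, ← hKP]
    exact hB₁.2


end
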